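/- Let G = (V, E) be a finite simple graph whose vertex set is partitioned into nonempty sets V_1, …, V_k, such that every edge of G joins vertices of two distinct classes and, for every pair 1 ≤ i < j ≤ k, there is at least one edge between V_i and V_j. For i < j let E_{i,j} be the set of edges with one endpoint in V_i and one in V_j. Let D be the digraph with vertex set V ⊎ E ⊎ V' ⊎ {s_1, …, s_k}, where V' = {v' : v ∈ V} is a copy of V, and with the following arcs: e → u and e → v for every edge e = uv ∈ E; e → f for every ordered pair of distinct edges e, f lying in the same set E_{i,j}; v → v' for every v ∈ V; and s_i → v for every 1 ≤ i ≤ k and every v ∈ V_i. Then D has a multipacking of size at least 2k + k(k−1)/2 if and only if G has an independent set S with |S ∩ V_i| = 1 for every 1 ≤ i ≤ k. -/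

import Mathlib

open scoped Classical

/-- `HasPath A k u v` means there is a directed walk of length `k` from `u` to `v`
in the digraph with arc relation `A`. -/
def HasPath {V : Type*} (A : V → V → Prop) : ℕ → V → V → Prop
  | 0, u, v => u = v
  | (n+1), u, v => ∃ w, A u w ∧ HasPath A n w v

/-- The directed distance from `u` to `v` (in `ℕ∞`, `⊤` meaning no directed path exists). -/
noncomputable def ddist {V : Type*} (A : V → V → Prop) (u v : V) : ℕ∞ :=
  sInf {n : ℕ∞ | ∃ k : ℕ, n = (k : ℕ∞) ∧ HasPath A k u v}

/-- `f : V → ℕ` is a dominating broadcast: every vertex `v` is within directed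
distance `f t` of some vertex `t` with `f t ≥ 1`. -/
def IsDomBroadcast {V : Type*} (A : V → V → Prop) (f : V → ℕ) : Prop :=
  ∀ v : V, ∃ t : V, 1 ≤ f t ∧ ddist A t v ≤ (f t : ℕ∞)

/-- The cost of a broadcast. -/
def cost {V : Type*} [Fintype V] (f : V → ℕ) : ℕ := ∑ v, f v

/-- The broadcast domination number `γ_b`. -/
noncomputable def gammaB {V : Type*} [Fintype V] (A : V → V → Prop) : ℕ :=
  sInf {c : ℕ | ∃ f : V → ℕ, IsDomBroadcast A f ∧ cost f = c}

/-- `S` is a multipacking: for every vertex `v` and every `e ≥ 1`, at most `e`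
vertices of `S` are at directed distance at most `e` from `v`. -/
noncomputable def IsMultipacking {V : Type*} [Fintype V] (A : V → V → Prop) (S : Finset V) : Prop :=
  ∀ v : V, ∀ e : ℕ, 1 ≤ e → (S.filter (fun u => ddist A v u ≤ (e : ℕ∞))).card ≤ e

/-- The multipacking number `mp`. -/
noncomputable def mpNum {V : Type*} [Fintype V] (A : V → V → Prop) : ℕ :=
  sSup {c : ℕ | ∃ S : Finset V, IsMultipacking A S ∧ S.card = c}

/-! ### Auxiliary material -/

theorem ddist_le_of_hasPath {V : Type*} {A : V → V → Prop} {n : ℕ} {u v : V}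
    (h : HasPath A n u v) : ddist A u v ≤ (n : ℕ∞) :=
  sInf_le ⟨n, rfl, h⟩

theorem ddist_le_iff {V : Type*} {A : V → V → Prop} {n : ℕ} {u v : V} :
    ddist A u v ≤ (n : ℕ∞) ↔ ∃ m ≤ n, HasPath A m u v := by
  constructor
  · intro h
    by_contra hc
    push_neg at hc
    have h2 : ((n+1 : ℕ) : ℕ∞) ≤ ddist A u v := by
      apply le_sInf
      rintro x ⟨m, rfl, hm⟩
      have : n + 1 ≤ m := by
        by_contra h'
        exact hc m (by omega) hm
      exact_mod_cast this
    have h3 := le_trans h2 h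
    rw [Nat.cast_le] at h3
    omega
  · rintro ⟨m, hm, hp⟩
    exact le_trans (ddist_le_of_hasPath hp) (by exact_mod_cast hm)

theorem ddist_self_le {V : Type*} {A : V → V → Prop} (u : V) (n : ℕ) :
    ddist A u u ≤ (n : ℕ∞) :=
  le_trans (ddist_le_of_hasPath (n := 0) rfl) (by simp)

section Reduction

variable {V : Type*} (G : SimpleGraph V) {k : ℕ} (part : V → Fin k)

/-- The arc relation of the reduction digraph. -/
def Arc : (V ⊕ (G.edgeSet ⊕ (V ⊕ Fin k))) → (V ⊕ (G.edgeSet ⊕ (V ⊕ Fin k))) → Prop := fun p q =>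
  match p with
  | Sum.inl v =>
    match q with
    | Sum.inl _ => False
    | Sum.inr (Sum.inl _) => False
    | Sum.inr (Sum.inr (Sum.inl w)) => w = v
    | Sum.inr (Sum.inr (Sum.inr _)) => False
  | Sum.inr (Sum.inl e) =>
    match q with
    | Sum.inl u => u ∈ (e : Sym2 V)
    | Sum.inr (Sum.inl f) =>
      e ≠ f ∧ Sym2.map part (e : Sym2 V) = Sym2.map part (f : Sym2 V)
    | Sum.inr (Sum.inr (Sum.inl _)) => False
    | Sum.inr (Sum.inr (Sum.inr _)) => False
  | Sum.inr (Sum.inr (Sum.inl _)) => False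
  | Sum.inr (Sum.inr (Sum.inr i)) =>
    match q with
    | Sum.inl v => part v = i
    | Sum.inr (Sum.inl _) => False
    | Sum.inr (Sum.inr (Sum.inl _)) => False
    | Sum.inr (Sum.inr (Sum.inr _)) => False

end Reduction

section Reduction2

variable {V : Type*}

/-- vertex copies -/
def vA (G : SimpleGraph V) {k : ℕ} (v : V) : V ⊕ (G.edgeSet ⊕ (V ⊕ Fin k)) := Sum.inl v
def eA (G : SimpleGraph V) {k : ℕ} (f : G.edgeSet) : V ⊕ (G.edgeSet ⊕ (V ⊕ Fin k)) :=
  Sum.inr (Sum.inl f)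
def cA (G : SimpleGraph V) {k : ℕ} (v : V) : V ⊕ (G.edgeSet ⊕ (V ⊕ Fin k)) :=
  Sum.inr (Sum.inr (Sum.inl v))
def sA (G : SimpleGraph V) {k : ℕ} (i : Fin k) : V ⊕ (G.edgeSet ⊕ (V ⊕ Fin k)) :=
  Sum.inr (Sum.inr (Sum.inr i))

variable {G : SimpleGraph V} {k : ℕ} {part : V → Fin k}

theorem reach_cA {v : V} {n : ℕ} {y} (h : HasPath (Arc G part) n (cA G v) y) :
    y = cA G v := by
  induction n with
  | zero => exact h.symm
  | succ n ih =>
    obtain ⟨w, hw, hp⟩ := h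
    rcases w with u | f | u | i <;> simp [Arc, cA] at hw

theorem reach_vA {v : V} {n : ℕ} {y} (h : HasPath (Arc G part) n (vA G v) y) :
    y = vA G v ∨ y = cA G v := by
  cases n with
  | zero => exact Or.inl h.symm
  | succ n =>
    obtain ⟨w, hw, hp⟩ := h
    rcases w with u | f | u | i <;> simp [Arc, vA] at hw
    subst hw
    exact Or.inr (reach_cA hp)

theorem reach_sA {i : Fin k} {n : ℕ} {y} (h : HasPath (Arc G part) n (sA G i) y) :
    y = sA G i ∨ ∃ v, part v = i ∧ (y = vA G v ∨ y = cA G v) := by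
  cases n with
  | zero => exact Or.inl h.symm
  | succ n =>
    obtain ⟨w, hw, hp⟩ := h
    rcases w with u | f | u | i' <;> simp [Arc, sA] at hw
    exact Or.inr ⟨u, hw, reach_vA hp⟩

theorem reach_eA {f : G.edgeSet} {n : ℕ} {y} (h : HasPath (Arc G part) n (eA G f) y) :
    (∃ g : G.edgeSet, Sym2.map part (g : Sym2 V) = Sym2.map part (f : Sym2 V) ∧ y = eA G g)
    ∨ (∃ v : V, part v ∈ Sym2.map part (f : Sym2 V) ∧ (y = vA G v ∨ y = cA G v)) := by
  induction n generalizing f with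
  | zero => exact Or.inl ⟨f, rfl, h.symm⟩
  | succ n ih =>
    obtain ⟨w, hw, hp⟩ := h
    rcases w with u | g | u | i <;> simp [Arc, eA] at hw
    · refine Or.inr ⟨u, Sym2.mem_map.2 ⟨u, hw, rfl⟩, reach_vA hp⟩
    · rcases ih hp with ⟨g', hm, hy⟩ | ⟨v, hv, hy⟩
      · exact Or.inl ⟨g', hm.trans hw.2.symm, hy⟩
      · exact Or.inr ⟨v, hw.2.symm ▸ hv, hy⟩

theorem ball1_sA {i : Fin k} {y} (h : ddist (Arc G part) (sA G i) y ≤ 1) :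
    y = sA G i ∨ ∃ v : V, y = vA G v := by
  obtain ⟨m, hm, hp⟩ := ddist_le_iff.1 h
  interval_cases m
  · exact Or.inl hp.symm
  · obtain ⟨w, hw, h0⟩ := hp
    have hwy : w = y := h0
    subst hwy
    rcases w with u | f | u | i' <;> simp [Arc, sA] at hw
    exact Or.inr ⟨u, rfl⟩

theorem ball1_eA {f : G.edgeSet} {y} (h : ddist (Arc G part) (eA G f) y ≤ 1) :
    (∃ g : G.edgeSet, Sym2.map part (g : Sym2 V) = Sym2.map part (f : Sym2 V) ∧ y = eA G g)
    ∨ (∃ v : V, y = vA G v) := by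
  obtain ⟨m, hm, hp⟩ := ddist_le_iff.1 h
  interval_cases m
  · exact Or.inl ⟨f, rfl, hp.symm⟩
  · obtain ⟨w, hw, h0⟩ := hp
    have hwy : w = y := h0
    subst hwy
    rcases w with u | g | u | i <;> simp [Arc, eA] at hw
    · exact Or.inr ⟨u, rfl⟩
    · exact Or.inl ⟨g, hw.2.symm, rfl⟩

theorem ball2_eA_cA {f : G.edgeSet} {v : V} (h : ddist (Arc G part) (eA G f) (cA G v) ≤ 2) :
    v ∈ (f : Sym2 V) := by
  obtain ⟨m, hm, hp⟩ := ddist_le_iff.1 h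
  interval_cases m
  · have hpc : eA G f = cA G v := hp
    simp [eA, cA] at hpc
  · obtain ⟨w, hw, h0⟩ := hp
    have hwy : w = cA G v := h0
    subst hwy
    simp [Arc, eA, cA] at hw
  · obtain ⟨w, hw, hp1⟩ := hp
    obtain ⟨w2, hw2, h0⟩ := hp1
    have hwy : w2 = cA G v := h0
    subst hwy
    rcases w with u | g | u | i <;> simp [Arc, eA, cA] at hw hw2
    · subst hw2; exact hw

/-- short-path existence facts -/
theorem ddist_sA_vA {i : Fin k} {v : V} (hv : part v = i) :
    ddist (Arc G part) (sA G i) (vA G v) ≤ 1 :=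
  ddist_le_of_hasPath (n := 1) ⟨vA G v, hv, rfl⟩

theorem ddist_sA_cA {i : Fin k} {v : V} (hv : part v = i) :
    ddist (Arc G part) (sA G i) (cA G v) ≤ 2 :=
  ddist_le_of_hasPath (n := 2) ⟨vA G v, hv, cA G v, rfl, rfl⟩

theorem ddist_vA_cA (v : V) : ddist (Arc G part) (vA G v) (cA G v) ≤ 1 :=
  ddist_le_of_hasPath (n := 1) ⟨cA G v, rfl, rfl⟩

theorem ddist_eA_eA {f g : G.edgeSet}
    (h : Sym2.map part (f : Sym2 V) = Sym2.map part (g : Sym2 V)) {n : ℕ} (hn : 1 ≤ n) :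
    ddist (Arc G part) (eA G f) (eA G g) ≤ n := by
  by_cases hfg : f = g
  · subst hfg; exact ddist_self_le _ _
  · refine le_trans (ddist_le_of_hasPath (n := 1) ⟨eA G g, ⟨hfg, h⟩, rfl⟩) ?_
    exact_mod_cast hn

theorem ddist_eA_cA {f : G.edgeSet} {v : V} (hv : v ∈ (f : Sym2 V)) :
    ddist (Arc G part) (eA G f) (cA G v) ≤ 2 :=
  ddist_le_of_hasPath (n := 2) ⟨vA G v, hv, cA G v, rfl, rfl⟩

theorem edge_rep (f : G.edgeSet) : ∃ a b : V, G.Adj a b ∧ (f : Sym2 V) = s(a, b) := by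
  obtain ⟨e, he⟩ := f
  induction e using Sym2.ind with
  | _ a b => exact ⟨a, b, he, rfl⟩

/-- classification of vertices of the reduction digraph -/
def phi (G : SimpleGraph V) {k : ℕ} (part : V → Fin k) :
    (V ⊕ (G.edgeSet ⊕ (V ⊕ Fin k))) → Fin k ⊕ Sym2 (Fin k)
  | Sum.inl v => Sum.inl (part v)
  | Sum.inr (Sum.inl f) => Sum.inr (Sym2.map part (f : Sym2 V))
  | Sum.inr (Sum.inr (Sum.inl v)) => Sum.inl (part v)
  | Sum.inr (Sum.inr (Sum.inr i)) => Sum.inl i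

theorem card3 {α : Type*} [DecidableEq α] (a b c : α) : ({a, b, c} : Finset α).card ≤ 3 :=
  calc ({a, b, c} : Finset α).card ≤ ({b, c} : Finset α).card + 1 := Finset.card_insert_le _ _
    _ ≤ (({c} : Finset α).card + 1) + 1 := Nat.add_le_add_right (Finset.card_insert_le _ _) 1
    _ = 3 := by simp

end Reduction2

set_option maxHeartbeats 1000000 in
/-- Correctness of the reduction from Multicolored Independent Set to Multipacking. -/
theorem stmt_7 {V : Type*} [Fintype V] (k : ℕ) (G : SimpleGraph V)
    [Fintype G.edgeSet]
    (part : V → Fin k) (hpart : Function.Surjective part)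
    (hcross : ∀ u v : V, G.Adj u v → part u ≠ part v)
    (hfull : ∀ i j : Fin k, i ≠ j → ∃ u v : V, G.Adj u v ∧ part u = i ∧ part v = j) :
    (∃ S : Finset (V ⊕ (G.edgeSet ⊕ (V ⊕ Fin k))),
        IsMultipacking (fun p q =>
          match p, q with
          | Sum.inr (Sum.inl e), Sum.inl u => u ∈ (e : Sym2 V)
          | Sum.inr (Sum.inl e), Sum.inr (Sum.inl f) =>
              e ≠ f ∧ Sym2.map part (e : Sym2 V) = Sym2.map part (f : Sym2 V)
          | Sum.inl v, Sum.inr (Sum.inr (Sum.inl w)) => w = v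
          | Sum.inr (Sum.inr (Sum.inr i)), Sum.inl v => part v = i
          | _, _ => False) S ∧ 2 * k + k * (k - 1) / 2 ≤ S.card) ↔
      (∃ I : Finset V, (∀ u ∈ I, ∀ v ∈ I, ¬ G.Adj u v) ∧
        ∀ i : Fin k, (I.filter (fun v => part v = i)).card = 1) := by
  have harc : (fun p q => match p, q with
          | Sum.inr (Sum.inl e), Sum.inl u => u ∈ (e : Sym2 V)
          | Sum.inr (Sum.inl e), Sum.inr (Sum.inl f) =>
              e ≠ f ∧ Sym2.map part (e : Sym2 V) = Sym2.map part (f : Sym2 V)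
          | Sum.inl v, Sum.inr (Sum.inr (Sum.inl w)) => w = v
          | Sum.inr (Sum.inr (Sum.inr i)), Sum.inl v => part v = i
          | _, _ => False) = Arc G part := by
    funext p q; rcases p with a|b|c|d <;> rcases q with a2|b2|c2|d2 <;> rfl
  rw [harc]
  have hchoosetwo : ((Finset.univ : Finset (Sym2 (Fin k))).filter (fun m => ¬ m.IsDiag)).card
      = k.choose 2 := by
    have h := Sym2.card_subtype_not_diag (α := Fin k)
    rw [Fintype.card_subtype, Fintype.card_fin] at h
    convert h using 2
  constructor
  · -- forward direction
    rintro ⟨S, hSmp, hcard⟩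
    have hfib : S.card = ∑ t : Fin k ⊕ Sym2 (Fin k),
        (S.filter (fun x => phi G part x = t)).card :=
      Finset.card_eq_sum_card_fiberwise (fun x _ => Finset.mem_univ _)
    have hshape : ∀ x m, phi G part x = Sum.inr m →
        ∃ g : G.edgeSet, x = eA G g ∧ Sym2.map part (g : Sym2 V) = m := by
      intro x m hx
      rcases x with v | g | v | i <;> simp [phi] at hx
      exact ⟨g, rfl, hx⟩
    have hb1 : ∀ i : Fin k, (S.filter (fun x => phi G part x = Sum.inl i)).card ≤ 2 := by
      intro i
      refine le_trans (Finset.card_le_card ?_) (hSmp (sA G i) 2 (by norm_num))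
      intro x hx
      rw [Finset.mem_filter] at hx ⊢
      obtain ⟨hxS, heq⟩ := hx
      refine ⟨hxS, ?_⟩
      rcases x with v | g | v | j <;> simp [phi] at heq
      · have h1 := ddist_sA_vA (G := G) heq
        refine le_trans h1 (by norm_num)
      · have h1 := ddist_sA_cA (G := G) heq
        exact_mod_cast h1
      · subst heq; exact ddist_self_le _ _
    have hb2 : ∀ m : Sym2 (Fin k),
        (S.filter (fun x => phi G part x = Sum.inr m)).card ≤ if m.IsDiag then 0 else 1 := by
      intro m
      by_cases hdiag : m.IsDiag
      · rw [if_pos hdiag]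
        refine Nat.le_zero.2 (Finset.card_eq_zero.2 (Finset.eq_empty_iff_forall_notMem.2 ?_))
        intro x hx
        rw [Finset.mem_filter] at hx
        obtain ⟨g, rfl, hgm⟩ := hshape x m hx.2
        obtain ⟨a, b, hadj, hab⟩ := edge_rep g
        rw [← hgm, hab] at hdiag
        simp [Sym2.map_pair_eq, Sym2.mk_isDiag_iff] at hdiag
        exact hcross a b hadj hdiag
      · rw [if_neg hdiag]
        rcases Finset.eq_empty_or_nonempty
            (S.filter (fun x => phi G part x = Sum.inr m)) with hemp | ⟨x, hx⟩
        · simp [hemp]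
        · rw [Finset.mem_filter] at hx
          obtain ⟨g, rfl, hgm⟩ := hshape x m hx.2
          refine le_trans (Finset.card_le_card ?_) (hSmp (eA G g) 1 le_rfl)
          intro y hy
          rw [Finset.mem_filter] at hy ⊢
          obtain ⟨g', rfl, hg'm⟩ := hshape y m hy.2
          refine ⟨hy.1, ?_⟩
          have := ddist_eA_eA (G := G) (hgm.trans hg'm.symm) (le_refl 1)
          exact_mod_cast this
    have hsumbnd : ∑ t : Fin k ⊕ Sym2 (Fin k),
        (Sum.elim (fun _ => 2) (fun m => if Sym2.IsDiag m then 0 else 1) t) =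
        2 * k + k.choose 2 := by
      rw [Fintype.sum_sum_type]
      have h1 : ∑ i : Fin k, (2 : ℕ) = 2 * k := by
        simp [Finset.sum_const, mul_comm]
      have h2 : ∑ m : Sym2 (Fin k), (if Sym2.IsDiag m then 0 else 1) = k.choose 2 := by
        rw [← hchoosetwo, Finset.card_filter]
        apply Finset.sum_congr rfl
        intro m _
        by_cases h : m.IsDiag <;> simp [h]
      simp only [Sum.elim_inl, Sum.elim_inr]
      rw [h1, h2]
    have hle : ∀ t : Fin k ⊕ Sym2 (Fin k), (S.filter (fun x => phi G part x = t)).card ≤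
        Sum.elim (fun _ => 2) (fun m => if Sym2.IsDiag m then 0 else 1) t := by
      rintro (i | m)
      · exact hb1 i
      · exact hb2 m
    have htot : S.card ≤ 2 * k + k.choose 2 := by
      rw [hfib, ← hsumbnd]
      exact Finset.sum_le_sum (fun t _ => hle t)
    have heqcard : S.card = 2 * k + k.choose 2 := by
      refine le_antisymm htot ?_
      rw [Nat.choose_two_right]
      exact hcard
    have hpoint : ∀ t : Fin k ⊕ Sym2 (Fin k),
        (S.filter (fun x => phi G part x = t)).card =
        Sum.elim (fun _ => 2) (fun m => if Sym2.IsDiag m then 0 else 1) t := by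
      have hsums : ∑ t : Fin k ⊕ Sym2 (Fin k), (S.filter (fun x => phi G part x = t)).card
          = ∑ t : Fin k ⊕ Sym2 (Fin k),
            Sum.elim (fun _ => 2) (fun m => if Sym2.IsDiag m then 0 else 1) t := by
        rw [← hfib, hsumbnd, heqcard]
      intro t
      exact (Finset.sum_eq_sum_iff_of_le (fun t _ => hle t)).1 hsums t (Finset.mem_univ t)
    have hcp : ∀ i : Fin k, ∃ v : V, part v = i ∧ cA G v ∈ S := by
      intro i
      by_contra hno
      push_neg at hno
      have hsub : S.filter (fun x => phi G part x = Sum.inl i) ⊆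
          S.filter (fun u => ddist (Arc G part) (sA G i) u ≤ ((1 : ℕ) : ℕ∞)) := by
        intro x hx
        rw [Finset.mem_filter] at hx ⊢
        obtain ⟨hxS, heq⟩ := hx
        refine ⟨hxS, ?_⟩
        rcases x with v | g | v | j <;> simp [phi] at heq
        · exact_mod_cast ddist_sA_vA (G := G) heq
        · exact absurd hxS (hno v heq)
        · subst heq; exact ddist_self_le _ _
      have h2 := hpoint (Sum.inl i)
      simp only [Sum.elim_inl] at h2
      have h3 := le_trans (Finset.card_le_card hsub) (hSmp (sA G i) 1 le_rfl)
      omega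
    choose w hw1 hw2 using hcp
    refine ⟨Finset.image w Finset.univ, ?_, ?_⟩
    · intro u hu v hv hadj
      simp only [Finset.mem_image, Finset.mem_univ, true_and] at hu hv
      obtain ⟨i, rfl⟩ := hu
      obtain ⟨j, rfl⟩ := hv
      obtain ⟨f, hf⟩ : ∃ f : G.edgeSet, (f : Sym2 V) = s(w i, w j) :=
        ⟨⟨s(w i, w j), G.mem_edgeSet.2 hadj⟩, rfl⟩
      have hndiag : ¬ (Sym2.map part (f : Sym2 V)).IsDiag := by
        rw [hf]
        simp only [Sym2.map_pair_eq, Sym2.mk_isDiag_iff]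
        exact hcross _ _ hadj
      have h2 := hpoint (Sum.inr (Sym2.map part (f : Sym2 V)))
      simp only [Sum.elim_inr, if_neg hndiag] at h2
      have hpos : 0 < (S.filter (fun x =>
          phi G part x = Sum.inr (Sym2.map part (f : Sym2 V)))).card := by omega
      obtain ⟨x, hx⟩ := Finset.card_pos.1 hpos
      rw [Finset.mem_filter] at hx
      obtain ⟨g, rfl, hgm⟩ := hshape _ _ hx.2
      have hwij : w i ≠ w j := hadj.ne
      have hsub : ({eA G g, cA G (w i), cA G (w j)} :
          Finset (V ⊕ (G.edgeSet ⊕ (V ⊕ Fin k)))) ⊆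
          S.filter (fun u => ddist (Arc G part) (eA G f) u ≤ ((2 : ℕ) : ℕ∞)) := by
        intro y hy
        simp only [Finset.mem_insert, Finset.mem_singleton] at hy
        rw [Finset.mem_filter]
        rcases hy with rfl | rfl | rfl
        · exact ⟨hx.1, by exact_mod_cast ddist_eA_eA (G := G) (n := 2) hgm.symm (by omega)⟩
        · refine ⟨hw2 i, ?_⟩
          have : w i ∈ (f : Sym2 V) := by rw [hf]; exact Sym2.mem_mk_left _ _
          exact_mod_cast ddist_eA_cA (G := G) this
        · refine ⟨hw2 j, ?_⟩
          have : w j ∈ (f : Sym2 V) := by rw [hf]; exact Sym2.mem_mk_right _ _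
          exact_mod_cast ddist_eA_cA (G := G) this
      have h3 : 3 ≤ (S.filter (fun u =>
          ddist (Arc G part) (eA G f) u ≤ ((2 : ℕ) : ℕ∞))).card := by
        refine le_trans (le_of_eq ?_) (Finset.card_le_card hsub)
        rw [Finset.card_insert_of_notMem (by simp [eA, cA]),
          Finset.card_insert_of_notMem (by simp [cA, hwij]), Finset.card_singleton]
      have h4 := hSmp (eA G f) 2 (by norm_num)
      omega
    · intro i
      have himg : (Finset.image w Finset.univ).filter (fun v => part v = i) = {w i} := by
        ext x
        simp only [Finset.mem_filter, Finset.mem_image, Finset.mem_univ, true_and,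
          Finset.mem_singleton]
        constructor
        · rintro ⟨⟨j, rfl⟩, hpx⟩
          rw [hw1 j] at hpx
          rw [hpx]
        · rintro rfl
          exact ⟨⟨i, rfl⟩, hw1 i⟩
      rw [himg, Finset.card_singleton]
  · -- backward direction
    rintro ⟨I, hind, hone⟩
    have hvex : ∀ i : Fin k, ∃ a, I.filter (fun v => part v = i) = {a} :=
      fun i => Finset.card_eq_one.1 (hone i)
    choose w hw using hvex
    have hwI : ∀ i, w i ∈ I ∧ part (w i) = i := by
      intro i
      have h1 : w i ∈ I.filter (fun v => part v = i) := by
        rw [hw i]; exact Finset.mem_singleton_self _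
      simpa using h1
    have hwuniq : ∀ i, ∀ x ∈ I, part x = i → x = w i := by
      intro i x hx hpx
      have h1 : x ∈ I.filter (fun v => part v = i) := Finset.mem_filter.2 ⟨hx, hpx⟩
      rw [hw i] at h1
      simpa using h1
    have hedgeex : ∀ m : {m : Sym2 (Fin k) // ¬ m.IsDiag},
        ∃ f : G.edgeSet, Sym2.map part (f : Sym2 V) = m.1 := by
      rintro ⟨m, hm⟩
      induction m using Sym2.ind with
      | _ i j =>
        have hij : i ≠ j := by simpa [Sym2.mk_isDiag_iff] using hm
        obtain ⟨u, v, hadj, hu, hv⟩ := hfull i j hij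
        exact ⟨⟨s(u, v), G.mem_edgeSet.2 hadj⟩, by simp [Sym2.map_pair_eq, hu, hv]⟩
    choose em hem using hedgeex
    set S : Finset (V ⊕ (G.edgeSet ⊕ (V ⊕ Fin k))) :=
      (Finset.univ.image (fun i : Fin k => sA G i) ∪ I.image (fun v => cA G v)) ∪
        Finset.univ.image (fun m : {m : Sym2 (Fin k) // ¬ m.IsDiag} => eA G (em m)) with hS
    have hmem : ∀ x, x ∈ S ↔ ((∃ i : Fin k, x = sA G i) ∨ (∃ v ∈ I, x = cA G v) ∨
        (∃ m : {m : Sym2 (Fin k) // ¬ m.IsDiag}, x = eA G (em m))) := by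
      intro x
      simp only [hS, Finset.mem_union, Finset.mem_image, Finset.mem_univ, true_and]
      constructor
      · rintro ((⟨i, rfl⟩ | ⟨v, hv, rfl⟩) | ⟨m, rfl⟩)
        · exact Or.inl ⟨i, rfl⟩
        · exact Or.inr (Or.inl ⟨v, hv, rfl⟩)
        · exact Or.inr (Or.inr ⟨m, rfl⟩)
      · rintro (⟨i, rfl⟩ | ⟨v, hv, rfl⟩ | ⟨m, rfl⟩)
        · exact Or.inl (Or.inl ⟨i, rfl⟩)
        · exact Or.inl (Or.inr ⟨v, hv, rfl⟩)
        · exact Or.inr ⟨m, rfl⟩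
    have hvnot : ∀ v : V, vA G v ∉ S := by
      intro v hv
      rcases (hmem _).1 hv with ⟨i, h⟩ | ⟨u, _, h⟩ | ⟨m, h⟩ <;> simp [vA, sA, cA, eA] at h
    refine ⟨S, ?_, ?_⟩
    · -- multipacking
      intro x e he
      rcases x with v | f | v | i
      · -- a vertex of V
        have hsub : S.filter (fun u => ddist (Arc G part) (Sum.inl v) u ≤ (e : ℕ∞)) ⊆
            ({cA G v} : Finset _) := by
          intro y hy
          rw [Finset.mem_filter] at hy
          obtain ⟨m, _, hp⟩ := ddist_le_iff.1 hy.2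
          rcases reach_vA (part := part) (v := v) hp with rfl | rfl
          · exact absurd hy.1 (hvnot v)
          · simp
        exact le_trans (Finset.card_le_card hsub) (by simpa using he)
      · -- an edge vertex
        obtain ⟨a, b, hadj, hfab⟩ := edge_rep f
        have hndiag : ¬ (Sym2.map part (f : Sym2 V)).IsDiag := by
          rw [hfab]
          simp only [Sym2.map_pair_eq, Sym2.mk_isDiag_iff]
          exact hcross a b hadj
        set m0 : {m : Sym2 (Fin k) // ¬ m.IsDiag} := ⟨Sym2.map part (f : Sym2 V), hndiag⟩
          with hm0
        have hedsame : ∀ m : {m : Sym2 (Fin k) // ¬ m.IsDiag},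
            Sym2.map part ((em m : G.edgeSet) : Sym2 V) = Sym2.map part (f : Sym2 V) →
            m = m0 := by
          intro m h
          apply Subtype.ext
          rw [← hem m, h]
        rcases eq_or_lt_of_le he with he1 | he1
        · -- e = 1
          have hsub : S.filter (fun u =>
              ddist (Arc G part) (Sum.inr (Sum.inl f)) u ≤ (e : ℕ∞)) ⊆
              ({eA G (em m0)} : Finset _) := by
            intro y hy
            rw [Finset.mem_filter] at hy
            have hd1 : ddist (Arc G part) (eA G f) y ≤ (1 : ℕ∞) := by
              have := hy.2
              rw [← he1] at this
              exact_mod_cast this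
            rcases ball1_eA hd1 with ⟨g, hg, rfl⟩ | ⟨u, rfl⟩
            · rcases (hmem _).1 hy.1 with ⟨i, h⟩ | ⟨u, _, h⟩ | ⟨m, h⟩
              · simp [eA, sA] at h
              · simp [eA, cA] at h
              · have hgem : g = em m := by simpa [eA] using h
                subst hgem
                rw [hedsame m hg]
                simp
            · exact absurd hy.1 (hvnot u)
          refine le_trans (Finset.card_le_card hsub) ?_
          simp [← he1]
        · rcases eq_or_lt_of_le (show 2 ≤ e from he1) with he2 | he2
          · -- e = 2
            have hball : ∀ y ∈ S.filter (fun u =>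
                ddist (Arc G part) (Sum.inr (Sum.inl f)) u ≤ (e : ℕ∞)),
                y = eA G (em m0) ∨ ∃ u ∈ I, u ∈ (f : Sym2 V) ∧ y = cA G u := by
              intro y hy
              rw [Finset.mem_filter] at hy
              obtain ⟨m, _, hp⟩ := ddist_le_iff.1 hy.2
              rcases reach_eA (part := part) hp with ⟨g, hg, rfl⟩ | ⟨u, hpu, rfl | rfl⟩
              · rcases (hmem _).1 hy.1 with ⟨i, h⟩ | ⟨u, _, h⟩ | ⟨mm, h⟩
                · simp [eA, sA] at h
                · simp [eA, cA] at h
                · have hgem : g = em mm := by simpa [eA] using h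
                  subst hgem
                  rw [hedsame mm hg]
                  exact Or.inl rfl
              · exact absurd hy.1 (hvnot u)
              · refine Or.inr ⟨u, ?_, ?_, rfl⟩
                · rcases (hmem _).1 hy.1 with ⟨i, h⟩ | ⟨u', hu', h⟩ | ⟨mm, h⟩
                  · simp [cA, sA] at h
                  · have : u = u' := by simpa [cA] using h
                    rwa [this]
                  · simp [cA, eA] at h
                · refine ball2_eA_cA (part := part) (f := f) (v := u) ?_
                  have := hy.2
                  rw [← he2] at this
                  exact_mod_cast this
            by_cases haI : a ∈ I
            · have hbI : b ∉ I := fun hb => hind a haI b hb hadj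
              have hsub : S.filter (fun u =>
                  ddist (Arc G part) (Sum.inr (Sum.inl f)) u ≤ (e : ℕ∞)) ⊆
                  ({eA G (em m0), cA G a} : Finset _) := by
                intro y hy
                rcases hball y hy with rfl | ⟨u, huI, humem, rfl⟩
                · simp
                · rw [hfab] at humem
                  rcases Sym2.mem_iff.1 humem with rfl | rfl
                  · simp
                  · exact absurd huI hbI
              refine le_trans (Finset.card_le_card hsub) ?_
              refine le_trans (Finset.card_insert_le _ _) ?_
              simp [← he2]
            · have hsub : S.filter (fun u =>
                  ddist (Arc G part) (Sum.inr (Sum.inl f)) u ≤ (e : ℕ∞)) ⊆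
                  ({eA G (em m0), cA G b} : Finset _) := by
                intro y hy
                rcases hball y hy with rfl | ⟨u, huI, humem, rfl⟩
                · simp
                · rw [hfab] at humem
                  rcases Sym2.mem_iff.1 humem with rfl | rfl
                  · exact absurd huI haI
                  · simp
              refine le_trans (Finset.card_le_card hsub) ?_
              refine le_trans (Finset.card_insert_le _ _) ?_
              simp [← he2]
          · -- e ≥ 3
            have he3 : 3 ≤ e := he2
            have hsub : S.filter (fun u =>
                ddist (Arc G part) (Sum.inr (Sum.inl f)) u ≤ (e : ℕ∞)) ⊆
                ({eA G (em m0), cA G (w (part a)), cA G (w (part b))} : Finset _) := by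
              intro y hy
              rw [Finset.mem_filter] at hy
              obtain ⟨m, _, hp⟩ := ddist_le_iff.1 hy.2
              rcases reach_eA (part := part) hp with ⟨g, hg, rfl⟩ | ⟨u, hpu, rfl | rfl⟩
              · rcases (hmem _).1 hy.1 with ⟨i, h⟩ | ⟨u, _, h⟩ | ⟨mm, h⟩
                · simp [eA, sA] at h
                · simp [eA, cA] at h
                · have hgem : g = em mm := by simpa [eA] using h
                  subst hgem
                  rw [hedsame mm hg]
                  simp
              · exact absurd hy.1 (hvnot u)
              · have huI : u ∈ I := by
                  rcases (hmem _).1 hy.1 with ⟨i, h⟩ | ⟨u', hu', h⟩ | ⟨mm, h⟩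
                  · simp [cA, sA] at h
                  · have : u = u' := by simpa [cA] using h
                    rwa [this]
                  · simp [cA, eA] at h
                rw [hfab] at hpu
                simp only [Sym2.map_pair_eq] at hpu
                rcases Sym2.mem_iff.1 hpu with hpa | hpb
                · have : u = w (part a) := hwuniq (part a) u huI hpa
                  subst this
                  simp
                · have : u = w (part b) := hwuniq (part b) u huI hpb
                  subst this
                  simp
            exact le_trans (Finset.card_le_card hsub) (le_trans (card3 _ _ _) he3)
      · -- a copy vertex
        have hsub : S.filter (fun u =>
            ddist (Arc G part) (Sum.inr (Sum.inr (Sum.inl v))) u ≤ (e : ℕ∞)) ⊆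
            ({cA G v} : Finset _) := by
          intro y hy
          rw [Finset.mem_filter] at hy
          obtain ⟨m, _, hp⟩ := ddist_le_iff.1 hy.2
          have := reach_cA (part := part) (v := v) hp
          simp [this]
        exact le_trans (Finset.card_le_card hsub) (by simpa using he)
      · -- a source vertex
        rcases eq_or_lt_of_le he with he1 | he1
        · have hsub : S.filter (fun u =>
              ddist (Arc G part) (Sum.inr (Sum.inr (Sum.inr i))) u ≤ (e : ℕ∞)) ⊆
              ({sA G i} : Finset _) := by
            intro y hy
            rw [Finset.mem_filter] at hy
            have hd1 : ddist (Arc G part) (sA G i) y ≤ (1 : ℕ∞) := by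
              have := hy.2
              rw [← he1] at this
              exact_mod_cast this
            rcases ball1_sA hd1 with rfl | ⟨u, rfl⟩
            · simp
            · exact absurd hy.1 (hvnot u)
          refine le_trans (Finset.card_le_card hsub) ?_
          simp [← he1]
        · have hsub : S.filter (fun u =>
              ddist (Arc G part) (Sum.inr (Sum.inr (Sum.inr i))) u ≤ (e : ℕ∞)) ⊆
              ({sA G i, cA G (w i)} : Finset _) := by
            intro y hy
            rw [Finset.mem_filter] at hy
            obtain ⟨m, _, hp⟩ := ddist_le_iff.1 hy.2
            rcases reach_sA (part := part) hp with rfl | ⟨u, hpu, rfl | rfl⟩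
            · simp
            · exact absurd hy.1 (hvnot u)
            · have huI : u ∈ I := by
                rcases (hmem _).1 hy.1 with ⟨i', h⟩ | ⟨u', hu', h⟩ | ⟨mm, h⟩
                · simp [cA, sA] at h
                · have : u = u' := by simpa [cA] using h
                  rwa [this]
                · simp [cA, eA] at h
              have : u = w i := hwuniq i u huI hpu
              subst this
              simp
          refine le_trans (Finset.card_le_card hsub) ?_
          refine le_trans (Finset.card_insert_le _ _) ?_
          simpa using (show 2 ≤ e from he1)
    · -- cardinality
      have hIcard : I.card = k := by
        have h1 : I.card = ∑ i : Fin k, (I.filter (fun v => part v = i)).card :=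
          Finset.card_eq_sum_card_fiberwise (fun x _ => Finset.mem_univ (part x))
        simp [h1, hone]
      have hd1 : Disjoint (Finset.univ.image (fun i : Fin k => sA G i))
          (I.image (fun v => cA G v)) := by
        rw [Finset.disjoint_left]
        rintro x hx1 hx2
        simp only [Finset.mem_image] at hx1 hx2
        obtain ⟨i, _, rfl⟩ := hx1
        obtain ⟨v, _, h⟩ := hx2
        simp [sA, cA] at h
      have hd2 : Disjoint ((Finset.univ.image (fun i : Fin k => sA G i)) ∪
          I.image (fun v => cA G v))
          (Finset.univ.image (fun m : {m : Sym2 (Fin k) // ¬ m.IsDiag} => eA G (em m))) := by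
        rw [Finset.disjoint_left]
        rintro x hx1 hx2
        simp only [Finset.mem_union, Finset.mem_image] at hx1 hx2
        obtain ⟨m, _, rfl⟩ := hx2
        rcases hx1 with ⟨i, _, h⟩ | ⟨v, _, h⟩ <;> simp [sA, cA, eA] at h
      have hc1 : (Finset.univ.image (fun i : Fin k => sA G i)).card = k := by
        rw [Finset.card_image_of_injective _ (fun a b h => by simpa [sA] using h)]
        simp
      have hc2 : (I.image (fun v => cA G (k := k) v)).card = k := by
        rw [Finset.card_image_of_injective _ (fun a b h => by simpa [cA] using h)]
        exact hIcard
      have hc3 : (Finset.univ.image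
          (fun m : {m : Sym2 (Fin k) // ¬ m.IsDiag} => eA G (k := k) (em m))).card = k.choose 2 := by
        rw [Finset.card_image_of_injective _ ?_]
        · rw [Finset.card_univ]
          have h := Sym2.card_subtype_not_diag (α := Fin k)
          rw [Fintype.card_fin] at h
          convert h using 1
        · intro m1 m2 h
          have h1 : em m1 = em m2 := by simpa [eA] using h
          apply Subtype.ext
          rw [← hem m1, ← hem m2, h1]
      have : S.card = k + k + k.choose 2 := by
        rw [hS, Finset.card_union_of_disjoint hd2, Finset.card_union_of_disjoint hd1,
          hc1, hc2, hc3]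
      rw [this, Nat.choose_two_right]
      omega
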